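/- Let P₁, P₂ be n×n row-stochastic matrices, λ ∈ (0,1), and v a probability vector, with corresponding PageRank vectors π₁^T = v^T(1−λ)(Id−λP₁)^{-1} and π₂^T = v^T(1−λ)(Id−λP₂)^{-1}. Then ‖π₁ − π₂‖₁ ≤ (λ/(1−λ)) ‖P₁ − P₂‖_∞, where ‖·‖_∞ is the maximum absolute row-sum norm. Consequently the PageRank vector depends continuously on the stochastic matrix. -/

import Mathlib

open scoped NNReal

attribute [local instance] Matrix.linftyOpNormedRing Matrix.linftyOpNormedAlgebra

section Aux

variable {n : ℕ}

lemma PR_row_le_norm (M : Matrix (Fin n) (Fin n) ℝ) (i : Fin n) :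
    ∑ j, |M i j| ≤ ‖M‖ := by
  rw [Matrix.linfty_opNorm_def]
  have h := Finset.le_sup (f := fun i => ∑ j, ‖M i j‖₊) (Finset.mem_univ i)
  have h' : ((∑ j, ‖M i j‖₊ : ℝ≥0) : ℝ) ≤
      ((Finset.univ.sup fun i => ∑ j, ‖M i j‖₊ : ℝ≥0) : ℝ) := NNReal.coe_le_coe.mpr h
  calc ∑ j, |M i j| = ((∑ j, ‖M i j‖₊ : ℝ≥0) : ℝ) := by
        push_cast
        exact Finset.sum_congr rfl fun j _ => (Real.norm_eq_abs _).symm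
    _ ≤ _ := h'

lemma PR_norm_le_of_rows {M : Matrix (Fin n) (Fin n) ℝ} {c : ℝ} (hc : 0 ≤ c)
    (h : ∀ i, ∑ j, |M i j| ≤ c) : ‖M‖ ≤ c := by
  rw [Matrix.linfty_opNorm_def]
  have : Finset.univ.sup (fun i => ∑ j, ‖M i j‖₊) ≤ (⟨c, hc⟩ : ℝ≥0) :=
    Finset.sup_le fun i _ => by
      refine NNReal.coe_le_coe.mp ?_
      push_cast
      calc ∑ j, ‖M i j‖ = ∑ j, |M i j| :=
            Finset.sum_congr rfl fun j _ => Real.norm_eq_abs _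
        _ ≤ c := h i
  exact_mod_cast this

lemma PR_vecMul_l1_le (x : Fin n → ℝ) (M : Matrix (Fin n) (Fin n) ℝ) :
    ∑ j, |Matrix.vecMul x M j| ≤ (∑ i, |x i|) * ‖M‖ := by
  have h1 : ∀ j, |Matrix.vecMul x M j| ≤ ∑ i, |x i| * |M i j| := fun j => by
    simpa [Matrix.vecMul, dotProduct, abs_mul] using
      Finset.abs_sum_le_sum_abs (fun i => x i * M i j) Finset.univ
  calc ∑ j, |Matrix.vecMul x M j| ≤ ∑ j, ∑ i, |x i| * |M i j| :=
        Finset.sum_le_sum fun j _ => h1 j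
    _ = ∑ i, |x i| * ∑ j, |M i j| := by
        rw [Finset.sum_comm]; simp [Finset.mul_sum]
    _ ≤ ∑ i, |x i| * ‖M‖ :=
        Finset.sum_le_sum fun i _ =>
          mul_le_mul_of_nonneg_left (PR_row_le_norm M i) (abs_nonneg _)
    _ = (∑ i, |x i|) * ‖M‖ := (Finset.sum_mul _ _ _).symm

lemma PR_stoch_inv (hn : 0 < n) (P : Matrix (Fin n) (Fin n) ℝ)
    (h : ∀ i j, 0 ≤ P i j) (hrow : ∀ i, ∑ j, P i j = 1)
    {l : ℝ} (hl0 : 0 < l) (hl1 : l < 1) :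
    (1 - l • P) * (1 - l • P)⁻¹ = 1 ∧ (1 - l • P)⁻¹ * (1 - l • P) = 1 ∧
      ‖(1 - l • P)⁻¹‖ ≤ (1 - l)⁻¹ := by
  haveI : Nonempty (Fin n) := ⟨⟨0, hn⟩⟩
  haveI : CompleteSpace (Matrix (Fin n) (Fin n) ℝ) :=
    FiniteDimensional.complete ℝ _
  have h1l : (0:ℝ) < 1 - l := by linarith
  have hProw : ∀ i, ∑ j, |P i j| ≤ 1 := fun i => le_of_eq <| by
    rw [← hrow i]; exact Finset.sum_congr rfl fun j _ => abs_of_nonneg (h i j)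
  have hP : ‖P‖ ≤ 1 := PR_norm_le_of_rows zero_le_one hProw
  have hsmul : ‖l • P‖ ≤ l := by
    rw [norm_smul, Real.norm_eq_abs, abs_of_pos hl0]
    exact mul_le_of_le_one_right hl0.le hP
  have hlt : ‖l • P‖ < 1 := lt_of_le_of_lt hsmul hl1
  have hu : IsUnit (1 - l • P) := isUnit_one_sub_of_norm_lt_one hlt
  have hd : IsUnit (1 - l • P).det := (Matrix.isUnit_iff_isUnit_det _).mp hu
  have hAi : (1 - l • P) * (1 - l • P)⁻¹ = 1 := Matrix.mul_nonsing_inv _ hd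
  have hiA : (1 - l • P)⁻¹ * (1 - l • P) = 1 := Matrix.nonsing_inv_mul _ hd
  refine ⟨hAi, hiA, ?_⟩
  set B := (1 - l • P)⁻¹ with hB
  have e : B = 1 + (l • P) * B := by
    have h' : B - (l • P) * B = 1 := by
      have := hAi; rwa [sub_mul, one_mul] at this
    rwa [sub_eq_iff_eq_add] at h'
  have hbound : ‖B‖ ≤ 1 + l * ‖B‖ := by
    calc ‖B‖ = ‖1 + (l • P) * B‖ := by rw [← e]
      _ ≤ ‖(1 : Matrix (Fin n) (Fin n) ℝ)‖ + ‖(l • P) * B‖ := norm_add_le _ _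
      _ ≤ 1 + ‖l • P‖ * ‖B‖ := by
          rw [norm_one]
          exact add_le_add_right (norm_mul_le _ _) 1
      _ ≤ 1 + l * ‖B‖ :=
          add_le_add_right (mul_le_mul_of_nonneg_right hsmul (norm_nonneg _)) 1
  have : ‖B‖ ≤ 1 / (1 - l) := (le_div_iff₀ h1l).mpr (by nlinarith [norm_nonneg B])
  simpa [one_div] using this

end Aux

theorem stmt_10 (n : ℕ) (hn : 0 < n)
    (P₁ P₂ : Matrix (Fin n) (Fin n) ℝ)
    (h1 : ∀ i j, 0 ≤ P₁ i j) (h1row : ∀ i, ∑ j, P₁ i j = 1)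
    (h2 : ∀ i j, 0 ≤ P₂ i j) (h2row : ∀ i, ∑ j, P₂ i j = 1)
    (l : ℝ) (hl0 : 0 < l) (hl1 : l < 1)
    (v : Fin n → ℝ) (hv : ∀ i, 0 ≤ v i) (hv1 : ∑ i, v i = 1)
    (π₁ π₂ : Fin n → ℝ)
    (hπ1 : π₁ = Matrix.vecMul v ((1 - l) • (1 - l • P₁)⁻¹))
    (hπ2 : π₂ = Matrix.vecMul v ((1 - l) • (1 - l • P₂)⁻¹)) :
    ∑ i, |π₁ i - π₂ i| ≤ (l / (1 - l)) *
      Finset.univ.sup' (⟨⟨0, hn⟩, Finset.mem_univ _⟩ :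
        (Finset.univ : Finset (Fin n)).Nonempty)
        (fun i => ∑ j, |P₁ i j - P₂ i j|) := by
  haveI : Nonempty (Fin n) := ⟨⟨0, hn⟩⟩
  have h1l : (0:ℝ) < 1 - l := by linarith
  obtain ⟨hA1, hA1', hB1⟩ := PR_stoch_inv hn P₁ h1 h1row hl0 hl1
  obtain ⟨hA2, hA2', hB2⟩ := PR_stoch_inv hn P₂ h2 h2row hl0 hl1
  set B₁ := (1 - l • P₁)⁻¹ with hB₁def
  set B₂ := (1 - l • P₂)⁻¹ with hB₂def
  set D := P₁ - P₂ with hDdef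
  set S := Finset.univ.sup' (⟨⟨0, hn⟩, Finset.mem_univ _⟩ :
      (Finset.univ : Finset (Fin n)).Nonempty)
      (fun i => ∑ j, |P₁ i j - P₂ i j|) with hSdef
  have hrowS : ∀ i, ∑ j, |D i j| ≤ S := fun i => by
    have h' := Finset.le_sup' (f := fun i => ∑ j, |P₁ i j - P₂ i j|) (Finset.mem_univ i)
    simp only [hDdef, Matrix.sub_apply]
    exact h'
  have hS0 : 0 ≤ S := le_trans (Finset.sum_nonneg fun j _ => abs_nonneg _) (hrowS ⟨0, hn⟩)
  have hDS : ‖D‖ ≤ S := PR_norm_le_of_rows hS0 hrowS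
  have h21 : (1 - l • P₂) - (1 - l • P₁) = l • D := by
    rw [hDdef, smul_sub]; abel
  have hmid : B₁ * ((l • D) * B₂) = B₁ - B₂ := by
    rw [← h21, sub_mul, hA2, mul_sub, mul_one, ← mul_assoc, hA1', one_mul]
  have hdiff : π₁ - π₂ = Matrix.vecMul π₁ ((l • D) * B₂) := by
    rw [hπ1, hπ2, Matrix.vecMul_vecMul, ← Matrix.vecMul_sub]
    congr 1
    rw [smul_mul_assoc, hmid, smul_sub]
  have hπ1n : ∑ i, |π₁ i| ≤ 1 := by
    have hv' : ∑ i, |v i| = 1 := by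
      rw [← hv1]; exact Finset.sum_congr rfl fun i _ => abs_of_nonneg (hv i)
    have hnorm : ‖(1 - l) • B₁‖ ≤ 1 := by
      rw [norm_smul, Real.norm_eq_abs, abs_of_pos h1l]
      calc (1 - l) * ‖B₁‖ ≤ (1 - l) * (1 - l)⁻¹ :=
            mul_le_mul_of_nonneg_left hB1 h1l.le
        _ = 1 := mul_inv_cancel₀ (ne_of_gt h1l)
    calc ∑ i, |π₁ i| ≤ (∑ i, |v i|) * ‖(1 - l) • B₁‖ := by
          rw [hπ1]; exact PR_vecMul_l1_le v _
      _ ≤ 1 := by rw [hv', one_mul]; exact hnorm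
  have hMn : ‖(l • D) * B₂‖ ≤ l * S * (1 - l)⁻¹ :=
    calc ‖(l • D) * B₂‖ ≤ ‖l • D‖ * ‖B₂‖ := norm_mul_le _ _
      _ ≤ (l * S) * (1 - l)⁻¹ := by
          refine mul_le_mul ?_ hB2 (norm_nonneg _) (by positivity)
          rw [norm_smul, Real.norm_eq_abs, abs_of_pos hl0]
          exact mul_le_mul_of_nonneg_left hDS hl0.le
  calc ∑ i, |π₁ i - π₂ i| = ∑ i, |(π₁ - π₂) i| := by simp
    _ = ∑ i, |Matrix.vecMul π₁ ((l • D) * B₂) i| := by rw [hdiff]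
    _ ≤ (∑ i, |π₁ i|) * ‖(l • D) * B₂‖ := PR_vecMul_l1_le _ _
    _ ≤ 1 * (l * S * (1 - l)⁻¹) :=
        mul_le_mul hπ1n hMn (norm_nonneg _) zero_le_one
    _ = l / (1 - l) * S := by field_simp
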